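/- Let n ≥ 1, q ∈ ℝ, and m ∈ ℕ. Then there exist real constants c₀, c₁, …, c_m depending only on n, q and m such that for every x ∈ ℝⁿ: (−Δ)^m (1 + ‖x‖²)^{−q/2} = Σ_{k=0}^{m} c_k (1 + ‖x‖²)^{−(q + 2m + 2k)/2}, where (−Δ)^m denotes the m-fold iteration of the negative Laplacian Δf = Σ_{j=1}^n ∂²f/∂x_j². -/

import Mathlib

open scoped BigOperators RealInnerProductSpace

/-- The negative Laplacian `(-Δ)f(x) = -∑_{j=1}^n ∂²f/∂x_j²(x)` as an operator on
functions on `ℝⁿ`. -/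
noncomputable def negLap {n : ℕ} :
    (EuclideanSpace ℝ (Fin n) → ℝ) → (EuclideanSpace ℝ (Fin n) → ℝ) :=
  fun f x =>
    -∑ j : Fin n,
      fderiv ℝ (fderiv ℝ f) x (EuclideanSpace.single j 1) (EuclideanSpace.single j 1)


noncomputable section

variable {n : ℕ}
abbrev E (n : ℕ) := EuclideanSpace ℝ (Fin n)

def Jb (n : ℕ) (r : ℝ) (x : E n) : ℝ := (1 + ‖x‖ ^ 2) ^ r

lemma base_pos (x : E n) : (0:ℝ) < 1 + ‖x‖ ^ 2 := by positivity

lemma hasFDerivAt_Jb (r : ℝ) (x : E n) :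
    HasFDerivAt (Jb n r) ((r * (1 + ‖x‖ ^ 2) ^ (r - 1)) • ((2:ℝ) • innerSL ℝ x)) x := by
  have h2 : HasFDerivAt (fun y : E n => 1 + ‖y‖ ^ 2) ((2:ℝ) • innerSL ℝ x) x := by
    have := ((hasStrictFDerivAt_norm_sq x).hasFDerivAt).const_add 1
    simpa [two_smul, smul_smul] using this
  exact h2.rpow_const (Or.inl (ne_of_gt (base_pos x)))

lemma fderiv_inner_apply' (N : ℕ) (c s : ℕ → ℝ) (v x w : E n) :
    fderiv ℝ (fun y : E n => ∑ i ∈ Finset.range N,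
        (c i * (s i * (1 + ‖y‖ ^ 2) ^ (s i - 1))) * (2 * ⟪v, y⟫)) x w
      = ∑ i ∈ Finset.range N,
          ((c i * (s i * (1 + ‖x‖ ^ 2) ^ (s i - 1))) * (2 * ⟪v, w⟫)
            + (2 * ⟪v, x⟫) *
              ((c i * (s i * ((s i - 1) * (1 + ‖x‖ ^ 2) ^ (s i - 2)))) * (2 * ⟪x, w⟫))) := by
  have H : HasFDerivAt (fun y : E n => ∑ i ∈ Finset.range N,
        (c i * (s i * (1 + ‖y‖ ^ 2) ^ (s i - 1))) * (2 * ⟪v, y⟫))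
      (∑ i ∈ Finset.range N,
        ((c i * (s i * (1 + ‖x‖ ^ 2) ^ (s i - 1))) • ((2:ℝ) • (innerSL ℝ v : E n →L[ℝ] ℝ))
          + (2 * ⟪v, x⟫) •
            ((c i * (s i * ((s i - 1) * (1 + ‖x‖ ^ 2) ^ (s i - 2)))) • ((2:ℝ) • innerSL ℝ x)))) x := by
    refine HasFDerivAt.fun_sum fun i _ => ?_
    have h1 : HasFDerivAt (fun y : E n => c i * (s i * Jb n (s i - 1) y))
        ((c i * (s i * ((s i - 1) * (1 + ‖x‖ ^ 2) ^ (s i - 2)))) • ((2:ℝ) • innerSL ℝ x)) x := by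
      have h := (hasFDerivAt_Jb (n := n) (s i - 1) x).const_mul (c i * s i)
      have e : s i - 1 - 1 = s i - 2 := by ring
      rw [e, smul_smul] at h
      have e2 : (fun y : E n => (c i * s i) * Jb n (s i - 1) y)
          = fun y : E n => c i * (s i * Jb n (s i - 1) y) := by
        funext y; ring
      rw [e2] at h
      have e3 : c i * (s i * ((s i - 1) * (1 + ‖x‖ ^ 2) ^ (s i - 2)))
          = c i * s i * ((s i - 1) * (1 + ‖x‖ ^ 2) ^ (s i - 2)) := by ring
      rw [e3]; exact h
    have h2 : HasFDerivAt (fun y : E n => 2 * ⟪v, y⟫)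
        ((2:ℝ) • (innerSL ℝ v : E n →L[ℝ] ℝ)) x :=
      ((innerSL ℝ v : E n →L[ℝ] ℝ).hasFDerivAt (x := x)).const_mul (2 : ℝ)
    exact h1.mul h2
  rw [H.fderiv]
  simp only [ContinuousLinearMap.sum_apply, ContinuousLinearMap.add_apply,
    ContinuousLinearMap.smul_apply, innerSL_apply_apply, smul_eq_mul, Jb]

lemma contDiff_Jb (r : ℝ) : ContDiff ℝ ⊤ (Jb n r) := by
  rw [contDiff_iff_contDiffAt]
  intro x
  exact (contDiff_const.add (contDiff_norm_sq ℝ)).contDiffAt.rpow_const_of_ne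
    (ne_of_gt (base_pos x))

lemma fderiv_combo (N : ℕ) (c s : ℕ → ℝ) (y : E n) :
    fderiv ℝ (fun z => ∑ i ∈ Finset.range N, c i * Jb n (s i) z) y
      = ∑ i ∈ Finset.range N,
          (c i * (s i * (1 + ‖y‖ ^ 2) ^ (s i - 1))) • ((2:ℝ) • innerSL ℝ y) := by
  refine HasFDerivAt.fderiv (HasFDerivAt.fun_sum fun i _ => ?_)
  have h := (hasFDerivAt_Jb (n := n) (s i) y).const_mul (c i)
  rwa [smul_smul] at h

lemma second_apply {g : E n → ℝ} (hg : ContDiff ℝ ⊤ g) (x v w : E n) :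
    fderiv ℝ (fderiv ℝ g) x w v = fderiv ℝ (fun y => fderiv ℝ g y v) x w := by
  have hd : DifferentiableAt ℝ (fderiv ℝ g) x :=
    ((hg.fderiv_right (m := 1) le_top).differentiable one_ne_zero).differentiableAt
  rw [fderiv_clm_apply hd (differentiableAt_const v)]
  simp

def Aco (n : ℕ) (r : ℝ) : ℝ := -(4 * r * (r - 1) + 2 * r * n)
def Bco (r : ℝ) : ℝ := 4 * r * (r - 1)

lemma negLap_combo (N : ℕ) (c s : ℕ → ℝ) (x : E n) :
    negLap (fun y => ∑ i ∈ Finset.range N, c i * Jb n (s i) y) x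
      = ∑ i ∈ Finset.range N,
          c i * (Aco n (s i) * Jb n (s i - 1) x + Bco (s i) * Jb n (s i - 2) x) := by
  set g : E n → ℝ := fun y => ∑ i ∈ Finset.range N, c i * Jb n (s i) y with hgdef
  have hg : ContDiff ℝ ⊤ g :=
    ContDiff.sum fun i _ => contDiff_const.mul (contDiff_Jb (s i))
  have hfun : ∀ v : E n, (fun y : E n => fderiv ℝ g y v)
      = fun y => ∑ i ∈ Finset.range N,
          (c i * (s i * (1 + ‖y‖ ^ 2) ^ (s i - 1))) * (2 * ⟪v, y⟫) := by
    intro v; funext y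
    rw [hgdef, fderiv_combo]
    simp only [ContinuousLinearMap.sum_apply, ContinuousLinearMap.smul_apply,
      innerSL_apply_apply, smul_eq_mul]
    exact Finset.sum_congr rfl fun i _ => by rw [real_inner_comm]
  have hstep : ∀ j : Fin n,
      fderiv ℝ (fderiv ℝ g) x (EuclideanSpace.single j 1) (EuclideanSpace.single j 1)
        = ∑ i ∈ Finset.range N,
          ((c i * (s i * (1 + ‖x‖ ^ 2) ^ (s i - 1))) * (2 * 1)
            + (2 * x j) * ((c i * (s i * ((s i - 1) * (1 + ‖x‖ ^ 2) ^ (s i - 2))))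
                * (2 * x j))) := by
    intro j
    rw [second_apply hg, hfun, fderiv_inner_apply']
    have hjj : ⟪(EuclideanSpace.single j 1 : E n), (EuclideanSpace.single j 1 : E n)⟫ = (1:ℝ) := by
      simp [EuclideanSpace.inner_single_left, EuclideanSpace.single_apply]
    have hjx : ⟪(EuclideanSpace.single j 1 : E n), x⟫ = x j := by
      simp [EuclideanSpace.inner_single_left]
    have hxj : ⟪x, (EuclideanSpace.single j 1 : E n)⟫ = x j := by
      simp [EuclideanSpace.inner_single_right]
    rw [hjj, hjx, hxj]
  have hnorm : ∑ j : Fin n, x j * x j = ‖x‖ ^ 2 := by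
    rw [← real_inner_self_eq_norm_sq]
    simp only [PiLp.inner_apply, RCLike.inner_apply, conj_trivial]
  show (-∑ j : Fin n,
      fderiv ℝ (fderiv ℝ g) x (EuclideanSpace.single j 1) (EuclideanSpace.single j 1)) = _
  rw [Finset.sum_congr rfl fun j _ => hstep j, Finset.sum_comm]
  rw [neg_eq_iff_eq_neg, ← Finset.sum_neg_distrib]
  refine Finset.sum_congr rfl fun i _ => ?_
  rw [Finset.sum_add_distrib, Finset.sum_const, Finset.card_univ, Fintype.card_fin,
    nsmul_eq_mul]
  rw [Jb, Jb, Aco, Bco]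
  obtain ⟨t, ht⟩ : ∃ t : ℝ, ‖x‖ ^ 2 = t := ⟨_, rfl⟩
  have htpos : (0:ℝ) < 1 + t := ht ▸ base_pos x
  rw [ht] at hnorm ⊢
  have h4 : ∑ j : Fin n, (2 * x j) *
        ((c i * (s i * ((s i - 1) * (1 + t) ^ (s i - 2)))) * (2 * x j))
      = (4 * (c i * (s i * ((s i - 1) * (1 + t) ^ (s i - 2))))) * t := by
    rw [← hnorm, Finset.mul_sum]
    exact Finset.sum_congr rfl fun j _ => by ring
  rw [h4]
  have hP1 : (1 + t) ^ (s i - 1) = (1 + t) ^ (s i - 2) * (1 + t) := by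
    have e : s i - 1 = (s i - 2) + 1 := by ring
    rw [e, Real.rpow_add_one (ne_of_gt htpos)]
  rw [hP1]
  ring

lemma iter_claim (r : ℝ) (m : ℕ) :
    ∃ c : ℕ → ℝ, ∀ x : E n,
      negLap^[m] (Jb n r) x
        = ∑ k ∈ Finset.range (m + 1), c k * Jb n (r - (m:ℝ) - (k:ℝ)) x := by
  induction m with
  | zero =>
    refine ⟨fun _ => 1, fun x => ?_⟩
    simp [Jb]
  | succ m ih =>
    obtain ⟨c, hc⟩ := ih
    refine ⟨fun j => (if j < m + 1 then c j * Aco n (r - (m:ℝ) - (j:ℝ)) else 0)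
      + (if j = 0 then 0 else c (j - 1) * Bco (r - (m:ℝ) - ((j - 1 : ℕ):ℝ))), ?_⟩
    intro x
    rw [Function.iterate_succ_apply']
    have hfn : negLap^[m] (Jb n r)
        = fun y => ∑ k ∈ Finset.range (m + 1),
            c k * Jb n ((fun k : ℕ => r - (m:ℝ) - (k:ℝ)) k) y := funext hc
    rw [hfn, negLap_combo (m + 1) c (fun k : ℕ => r - (m:ℝ) - (k:ℝ)) x]
    simp only [mul_add, add_mul]
    rw [Finset.sum_add_distrib, Finset.sum_add_distrib]
    congr 1
    · conv_rhs => rw [Finset.sum_range_succ]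
      have hlast : ¬ (m + 1 < m + 1) := lt_irrefl _
      rw [if_neg hlast, zero_mul, add_zero]
      refine Finset.sum_congr rfl fun j hj => ?_
      rw [if_pos (Finset.mem_range.mp hj)]
      have he : r - ((m + 1 : ℕ):ℝ) - (j:ℝ) = r - (m:ℝ) - (j:ℝ) - 1 := by
        push_cast; ring
      rw [he, mul_assoc]
    · conv_rhs => rw [Finset.sum_range_succ']
      rw [if_pos rfl, zero_mul, add_zero]
      refine Finset.sum_congr rfl fun j hj => ?_
      rw [if_neg (Nat.succ_ne_zero j), Nat.add_sub_cancel]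
      have he : r - ((m + 1 : ℕ):ℝ) - ((j + 1 : ℕ):ℝ) = r - (m:ℝ) - (j:ℝ) - 2 := by
        push_cast; ring
      rw [he, mul_assoc]


end

/-- The iterated negative Laplacian of `⟨x⟩^{-q} = (1+‖x‖²)^{-q/2}` is a linear
combination of the functions `⟨x⟩^{-q-2m-2k}`, `k = 0, …, m`. -/
theorem iterated_neg_laplacian_japanese_bracket (n : ℕ) (hn : 1 ≤ n) (q : ℝ) (m : ℕ) :
    ∃ c : Fin (m + 1) → ℝ,
      ∀ x : EuclideanSpace ℝ (Fin n),
        (negLap^[m] (fun y : EuclideanSpace ℝ (Fin n) => (1 + ‖y‖ ^ 2) ^ (-q / 2))) x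
          = ∑ k : Fin (m + 1),
              c k * (1 + ‖x‖ ^ 2) ^ (-(q + 2 * (m : ℝ) + 2 * (k : ℝ)) / 2) := by
  obtain ⟨c, hc⟩ := iter_claim (n := n) (-q / 2) m
  refine ⟨fun k => c k, fun x => ?_⟩
  have h0 : (fun y : E n => (1 + ‖y‖ ^ 2) ^ (-q / 2)) = Jb n (-q / 2) := rfl
  rw [h0, hc x]
  rw [Fin.sum_univ_eq_sum_range
    (fun k : ℕ => c k * (1 + ‖x‖ ^ 2) ^ (-(q + 2 * (m : ℝ) + 2 * (k : ℝ)) / 2)) (m + 1)]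
  refine Finset.sum_congr rfl fun k _ => ?_
  have he : -q / 2 - (m:ℝ) - (k:ℝ) = -(q + 2 * (m:ℝ) + 2 * (k:ℝ)) / 2 := by ring
  rw [Jb, he]
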